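/- Let c and d be integers with d ≥ c ≥ 3. If q = 2 and d is even, then the polynomial ξ_{2,c,d}(ẑ) has exactly one zero ẑ₂ in (0, 1) and exactly one zero ẑ₂′ in (−1, 0), and ξ_{2,c,d} is strictly positive on (ẑ₂′, ẑ₂) and strictly negative on (−1, ẑ₂′) ∪ (ẑ₂, 1). If q ≥ 2 is an integer with q ≥ 3 or d odd, then ξ_{q,c,d}(ẑ) has a unique zero ẑ₂ in (−1/(q−1), 1); this zero satisfies ẑ₂ > 0, and ξ_{q,c,d} is strictly positive on (−1/(q−1), ẑ₂) and strictly negative on (ẑ₂, 1). -/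

import Mathlib

open Real Set Filter Polynomial
open scoped Classical

/-- The polynomial function `ξ_{q,c,d}`. -/
noncomputable def xiF (q c d : ℕ) (z : ℝ) : ℝ :=
  (∑ i ∈ Finset.range (d - 2), z ^ i)
    - (((c : ℝ) - 1) * ((d : ℝ) - 1) - 1) * z ^ (d - 2)
    - ((q : ℝ) - 1) * (((c : ℝ) - 1) * ((d : ℝ) - 1) - 1) * z ^ (d - 1)
    + ((q : ℝ) - 1) * ∑ i ∈ Finset.range (d - 2), z ^ (d + i)

lemma sum_range_two_mul (f : ℕ → ℝ) (n : ℕ) :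
    ∑ i ∈ Finset.range (2 * n), f i = ∑ i ∈ Finset.range n, (f (2 * i) + f (2 * i + 1)) := by
  induction n with
  | zero => simp
  | succ n ih =>
    rw [Finset.sum_range_succ, ← ih, show 2 * (n + 1) = (2 * n + 1) + 1 by ring,
      Finset.sum_range_succ, Finset.sum_range_succ]
    ring

lemma convexOn_affine (a b : ℝ) : ConvexOn ℝ (Set.Ioi (0:ℝ)) (fun z => a + b * z) := by
  refine ⟨convex_Ioi 0, fun x _ y _ p q hp hq hpq => ?_⟩
  simp only [smul_eq_mul]
  apply le_of_eq
  rw [show p = 1 - q by linarith]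
  ring

lemma convexOn_sum_pow (n k : ℕ) :
    ConvexOn ℝ (Set.Ioi (0:ℝ)) (fun z => ∑ i ∈ Finset.range n, z ^ (i + k)) := by
  induction n with
  | zero =>
    have h0 : ConvexOn ℝ (Set.Ioi (0:ℝ)) (fun _ : ℝ => (0:ℝ)) := convexOn_const _ (convex_Ioi 0)
    exact h0.congr fun x _ => by simp
  | succ n ih =>
    have h := (convexOn_pow (𝕜 := ℝ) (n + k)).subset Set.Ioi_subset_Ici_self (convex_Ioi 0)
    exact (ih.add h).congr fun x hx => (Finset.sum_range_succ _ _).symm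

lemma convexOn_sum_invpow (n : ℕ) :
    ConvexOn ℝ (Set.Ioi (0:ℝ)) (fun z => ∑ i ∈ Finset.range n, (z ^ (i + 2))⁻¹) := by
  induction n with
  | zero =>
    have h0 : ConvexOn ℝ (Set.Ioi (0:ℝ)) (fun _ : ℝ => (0:ℝ)) := convexOn_const _ (convex_Ioi 0)
    exact h0.congr fun x _ => by simp
  | succ n ih =>
    have h : ConvexOn ℝ (Set.Ioi (0:ℝ)) (fun z : ℝ => (z ^ (n + 2))⁻¹) := by
      have := convexOn_zpow (𝕜 := ℝ) (-(n + 2) : ℤ)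
      refine this.congr fun x hx => ?_
      beta_reduce
      rw [zpow_neg]
      norm_cast
    exact (ih.add h).congr fun x hx => (Finset.sum_range_succ _ _).symm

lemma strictConvexOn_sum_invpow (n : ℕ) (hn : 1 ≤ n) :
    StrictConvexOn ℝ (Set.Ioi (0:ℝ)) (fun z => ∑ i ∈ Finset.range n, (z ^ (i + 1))⁻¹) := by
  obtain ⟨m, rfl⟩ : ∃ m, n = m + 1 := ⟨n - 1, by omega⟩
  have hstrict : StrictConvexOn ℝ (Set.Ioi (0:ℝ)) (fun z : ℝ => (z ^ (0 + 1))⁻¹) := by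
    have := strictConvexOn_zpow (m := -1) (by norm_num) (by norm_num)
    refine this.congr fun x hx => ?_
    beta_reduce
    rw [zpow_neg, zpow_one, zero_add, pow_one]
  refine ((convexOn_sum_invpow m).add_strictConvexOn hstrict).congr fun x hx => ?_
  rw [Finset.sum_range_succ']
  simp only [Pi.add_apply]

lemma convex_sign (f : ℝ → ℝ) (hf : StrictConvexOn ℝ (Set.Ioi 0) f)
    (ε : ℝ) (hε : ε ∈ Set.Ioo (0:ℝ) 1) (hfε : 0 < f ε) (hf1 : f 1 < 0) :
    ∃ s2 ∈ Set.Ioo (0:ℝ) 1, f s2 = 0 ∧ (∀ s ∈ Set.Ioo (0:ℝ) s2, 0 < f s) ∧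
      (∀ s ∈ Set.Ioo s2 1, f s < 0) := by
  have hcont : ContinuousOn f (Set.Icc ε 1) :=
    (hf.convexOn.continuousOn isOpen_Ioi).mono fun x hx => lt_of_lt_of_le hε.1 hx.1
  obtain ⟨s2, hs2, hfs2⟩ := intermediate_value_Ioo' hε.2.le hcont ⟨hf1, hfε⟩
  have hs2' : s2 ∈ Set.Ioo (0:ℝ) 1 := ⟨hε.1.trans hs2.1, hs2.2⟩
  refine ⟨s2, hs2', hfs2, ?_, ?_⟩
  · intro s hs
    by_contra hcon
    push_neg at hcon
    have hs0 : (0:ℝ) < s := hs.1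
    have hss2 : s < s2 := hs.2
    have hs21 : s2 < 1 := hs2'.2
    have h1s : (0:ℝ) < 1 - s := by linarith
    have hapos : 0 < (1 - s2) / (1 - s) := div_pos (by linarith) h1s
    have hbpos : 0 < (s2 - s) / (1 - s) := div_pos (by linarith) h1s
    have hab : (1 - s2) / (1 - s) + (s2 - s) / (1 - s) = 1 := by field_simp; ring
    have hkey := hf.2 (Set.mem_Ioi.2 hs0) (Set.mem_Ioi.2 one_pos)
      (by linarith : s ≠ 1) hapos hbpos hab
    have hcomb : ((1 - s2) / (1 - s)) • s + ((s2 - s) / (1 - s)) • (1:ℝ) = s2 := by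
      have hne : (1:ℝ) - s ≠ 0 := by linarith
      simp only [smul_eq_mul, mul_one]
      rw [div_mul_eq_mul_div, ← add_div, div_eq_iff hne]
      ring
    rw [hcomb] at hkey
    simp only [smul_eq_mul] at hkey
    nlinarith [mul_nonpos_of_nonneg_of_nonpos hapos.le hcon,
      mul_neg_of_pos_of_neg hbpos hf1]
  · intro s hs
    have hss2 : s2 < s := hs.1
    have hs1 : s < 1 := hs.2
    have hs21 : s2 < 1 := hs2'.2
    have h1s : (0:ℝ) < 1 - s2 := by linarith
    have hapos : 0 < (1 - s) / (1 - s2) := div_pos (by linarith) h1s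
    have hbpos : 0 < (s - s2) / (1 - s2) := div_pos (by linarith) h1s
    have hab : (1 - s) / (1 - s2) + (s - s2) / (1 - s2) = 1 := by field_simp; ring
    have hkey := hf.2 (Set.mem_Ioi.2 hs2'.1) (Set.mem_Ioi.2 one_pos)
      (by linarith : s2 ≠ 1) hapos hbpos hab
    have hcomb : ((1 - s) / (1 - s2)) • s2 + ((s - s2) / (1 - s2)) • (1:ℝ) = s := by
      have hne : (1:ℝ) - s2 ≠ 0 := by linarith
      simp only [smul_eq_mul, mul_one]
      rw [div_mul_eq_mul_div, ← add_div, div_eq_iff hne]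
      ring
    rw [hcomb] at hkey
    simp only [smul_eq_mul] at hkey
    nlinarith [mul_neg_of_pos_of_neg hbpos hf1]

lemma nat_sq_le_pow (n : ℕ) (hn : 4 ≤ n) : n ^ 2 ≤ 2 ^ n := by
  induction n with
  | zero => omega
  | succ n ih =>
    rcases Nat.lt_or_ge n 4 with h | h
    · interval_cases n <;> simp_all
    · have h1 := ih h
      have h2 : 2 * n + 1 ≤ n ^ 2 := by nlinarith
      rw [pow_succ 2 n]
      nlinarith [h1, h2]

lemma xiF_eq (q c d : ℕ) (hd : 2 ≤ d) (z : ℝ) :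
    xiF q c d z = (∑ i ∈ Finset.range (d - 2), z ^ i) * (1 + ((q:ℝ) - 1) * z ^ d)
      - (((c:ℝ) - 1) * ((d:ℝ) - 1) - 1) * z ^ (d - 2) * (1 + ((q:ℝ) - 1) * z) := by
  unfold xiF
  have h : ∀ i ∈ Finset.range (d - 2), z ^ (d + i) = z ^ d * z ^ i :=
    fun i _ => pow_add z d i
  rw [Finset.sum_congr rfl h, ← Finset.mul_sum]
  have h2 : z ^ (d - 1) = z ^ (d - 2) * z := by
    rw [← pow_succ]
    congr 1
    omega
  rw [h2]
  ring

lemma xiF_zero (q c d : ℕ) (hd : 2 < d) : xiF q c d 0 = 1 := by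
  unfold xiF
  rw [Finset.sum_eq_single 0 (fun i _ hi => zero_pow hi) (by simp [Finset.mem_range]; omega),
    Finset.sum_eq_zero (fun i _ => zero_pow (by omega))]
  rw [zero_pow (show d - 2 ≠ 0 by omega), zero_pow (show d - 1 ≠ 0 by omega)]
  norm_num

set_option maxHeartbeats 1000000 in
lemma xiF_pos_neg (q c d : ℕ) (hc : 3 ≤ c) (hcd : c ≤ d) (hq : 2 ≤ q)
    (hqd : 3 ≤ q ∨ Odd d) {z : ℝ} (hz1 : -(1 / ((q:ℝ) - 1)) < z) (hz0 : z < 0) :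
    0 < xiF q c d z := by
  have hd3 : 3 ≤ d := hc.trans hcd
  set A : ℝ := ((c:ℝ) - 1) * ((d:ℝ) - 1) - 1 with hA
  have hdR : (3:ℝ) ≤ (d:ℝ) := by exact_mod_cast hd3
  have hcR : (3:ℝ) ≤ (c:ℝ) := by exact_mod_cast hc
  have hAge : 2 * ((d:ℝ) - 1) - 1 ≤ A := by nlinarith
  have hA0 : 0 < A := by nlinarith
  have hqR : (2:ℝ) ≤ (q:ℝ) := by exact_mod_cast hq
  have hq1 : (1:ℝ) ≤ (q:ℝ) - 1 := by linarith
  have hq1pos : (0:ℝ) < (q:ℝ) - 1 := by linarith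
  have hbinv : ((q:ℝ) - 1) * (1 / ((q:ℝ) - 1)) = 1 := by field_simp
  have hb1 : 1 / ((q:ℝ) - 1) ≤ 1 := by rw [div_le_one hq1pos]; linarith
  have hzm1 : -1 < z := by linarith
  have hqz : 0 < 1 + ((q:ℝ) - 1) * z := by
    have h := mul_lt_mul_of_pos_left hz1 hq1pos
    nlinarith [hbinv]
  set S : ℝ := ∑ i ∈ Finset.range (d - 2), z ^ i with hS
  have hgeom : S * (1 - z) = 1 - z ^ (d - 2) := by
    have h := geom_sum_mul z (d - 2)
    rw [hS]; linear_combination -h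
  clear_value A S
  rw [xiF_eq q c d (by omega) z, ← hA, ← hS]
  rcases Nat.even_or_odd d with hdev | hdodd
  · -- d even, so q ≥ 3
    have hq3 : 3 ≤ q := hqd.resolve_right (Nat.not_odd_iff_even.mpr hdev)
    have hq2R : (2:ℝ) ≤ (q:ℝ) - 1 := by
      have : (3:ℝ) ≤ (q:ℝ) := by exact_mod_cast hq3
      linarith
    have hd4 : 4 ≤ d := by obtain ⟨k, hk⟩ := hdev; omega
    have hevd2 : Even (d - 2) := by obtain ⟨k, hk⟩ := hdev; exact ⟨k - 1, by omega⟩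
    set t : ℝ := -z with ht
    clear_value t
    have hz_t : z = -t := by rw [ht]; ring
    have ht0 : 0 < t := by rw [ht]; linarith
    have htb : t < 1 / ((q:ℝ) - 1) := by rw [ht]; linarith
    have ht12 : t < 1/2 := by
      have h : 1 / ((q:ℝ) - 1) ≤ 1/2 := by
        rw [div_le_div_iff₀ hq1pos (by norm_num : (0:ℝ) < 2)]; linarith
      linarith
    have hzd2 : z ^ (d - 2) = t ^ (d - 2) := by rw [hz_t, (hevd2.neg_pow t)]
    have hzd : z ^ d = t ^ d := by rw [hz_t, (hdev.neg_pow t)]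
    have htd2 : t ^ (d - 2) ≤ t ^ 2 :=
      pow_le_pow_of_le_one ht0.le (by linarith) (by omega)
    have hgeom' : S * (1 + t) = 1 - t ^ (d - 2) := by
      rw [hz_t] at hgeom
      rw [hevd2.neg_pow t] at hgeom
      linear_combination hgeom
    have hSge : 1 - t ≤ S := by nlinarith [hgeom', htd2, ht0]
    have h2t : 0 < 1 - 2*t := by linarith
    have hqt : 1 - ((q:ℝ)-1)*t ≤ 1 - 2*t := by
      have := mul_le_mul_of_nonneg_right hq2R ht0.le
      linarith
    have h27 : t^2*(1-2*t) ≤ 1/27 := by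
      have hkey : 1/27 - t^2*(1-2*t) = 2*(t-1/3)^2*(t+1/6) := by ring
      have hnn : 0 ≤ 2*(t-1/3)^2*(t+1/6) :=
        mul_nonneg (by positivity) (by linarith)
      linarith
    have hpow : t^(d-2) ≤ t^2 * (1/2:ℝ)^(d-4) := by
      have he : t^(d-2) = t^2 * t^(d-4) := by rw [← pow_add]; congr 1; omega
      rw [he]
      exact mul_le_mul_of_nonneg_left (pow_le_pow_left₀ ht0.le ht12.le (d-4)) (sq_nonneg t)
    have hA8 : A * (1/2:ℝ)^(d-4) ≤ 8 := by
      have hcdR : (c:ℝ) ≤ (d:ℝ) := by exact_mod_cast hcd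
      have hAle : A ≤ ((d:ℝ)-1)^2 - 1 := by nlinarith
      have hA2 : A ≤ (2:ℝ)^(d-1) := by
        rcases eq_or_lt_of_le hd4 with h4 | h5
        · have h4' : d = 4 := h4.symm
          subst h4'
          norm_num at hAle ⊢
          linarith
        · have hn : 4 ≤ d - 1 := by omega
          have hnat := nat_sq_le_pow (d-1) hn
          have hcast : ((d:ℝ)-1)^2 ≤ (2:ℝ)^(d-1) := by
            have h1 : (((d-1 : ℕ)):ℝ)^2 ≤ ((2:ℝ))^(d-1) := by
              exact_mod_cast hnat
            have h2 : (((d-1 : ℕ)):ℝ) = (d:ℝ) - 1 := by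
              rw [Nat.cast_sub (by omega : 1 ≤ d)]; norm_num
            rwa [h2] at h1
          linarith
      have hhalfpos : (0:ℝ) < (1/2:ℝ)^(d-4) := by positivity
      have heq : (2:ℝ)^(d-1) * (1/2:ℝ)^(d-4) = 8 := by
        rw [show d - 1 = (d-4) + 3 by omega, pow_add, div_pow, one_pow]
        have h2ne : (2:ℝ)^(d-4) ≠ 0 := by positivity
        field_simp
        ring
      calc A * (1/2:ℝ)^(d-4) ≤ (2:ℝ)^(d-1) * (1/2:ℝ)^(d-4) :=
            mul_le_mul_of_nonneg_right hA2 hhalfpos.le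
        _ = 8 := heq
    have hkey : A * t^(d-2) * (1 - ((q:ℝ)-1)*t) < 1 - t := by
      have hAt : 0 ≤ A * t^(d-2) := by positivity
      have s1 : A * t^(d-2) * (1 - ((q:ℝ)-1)*t) ≤ A * t^(d-2) * (1-2*t) :=
        mul_le_mul_of_nonneg_left hqt hAt
      have s2 : A * t^(d-2) * (1-2*t) ≤ A * (t^2 * (1/2:ℝ)^(d-4)) * (1-2*t) :=
        mul_le_mul_of_nonneg_right (mul_le_mul_of_nonneg_left hpow hA0.le) h2t.le
      have s3 : A * (t^2 * (1/2:ℝ)^(d-4)) * (1-2*t)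
          = (A * (1/2:ℝ)^(d-4)) * (t^2*(1-2*t)) := by ring
      have hq0 : 0 ≤ t^2*(1-2*t) := by positivity
      have s4 : (A * (1/2:ℝ)^(d-4)) * (t^2*(1-2*t)) ≤ 8 * (1/27) :=
        mul_le_mul hA8 h27 hq0 (by norm_num)
      have hchain : A * t^(d-2) * (1 - ((q:ℝ)-1)*t) ≤ 8 * (1/27) :=
        (s1.trans s2).trans (le_of_eq s3 |>.trans s4)
      have hlast : (8:ℝ) * (1/27) < 1 - t := by linarith
      linarith
    have hF1 : 1 ≤ 1 + ((q:ℝ)-1)*z^d := by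
      rw [hzd]; nlinarith [pow_nonneg ht0.le d]
    have hSpos : 0 < S := by linarith
    have hprod : A * z^(d-2) * (1 + ((q:ℝ)-1)*z) = A * t^(d-2) * (1 - ((q:ℝ)-1)*t) := by
      rw [hzd2, hz_t]; ring
    have hS1 : S ≤ S * (1 + ((q:ℝ)-1)*z^d) := le_mul_of_one_le_right hSpos.le hF1
    linarith [hkey, hS1, hSge, hprod]
  · -- d odd
    have hd2odd : Odd (d - 2) := by obtain ⟨k, hk⟩ := hdodd; exact ⟨k - 1, by omega⟩
    have hzd2neg : z ^ (d-2) < 0 := hd2odd.pow_neg hz0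
    have h1z : (0:ℝ) < 1 - z := by linarith
    have hSpos : 0 < S := by nlinarith [hgeom, hzd2neg, h1z]
    have habs : |z| ^ d ≤ |z| :=
      pow_le_of_le_one (abs_nonneg z) (abs_le.mpr ⟨by linarith, by linarith⟩) (by omega)
    have hzd : z ≤ z ^ d := by
      have h1 : -|z ^ d| ≤ z ^ d := neg_abs_le _
      rw [abs_pow] at h1
      have h3 : |z| = -z := abs_of_neg hz0
      linarith
    have hF1 : 0 < 1 + ((q:ℝ)-1) * z^d := by
      have h := mul_lt_mul_of_pos_left (lt_of_lt_of_le hz1 hzd) hq1pos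
      nlinarith [hbinv]
    have hterm : A * z^(d-2) * (1 + ((q:ℝ)-1)*z) < 0 :=
      mul_neg_of_neg_of_pos (mul_neg_of_pos_of_neg hA0 hzd2neg) hqz
    nlinarith [mul_pos hSpos hF1, hterm]

set_option maxHeartbeats 1000000 in
lemma part_two (c d : ℕ) (hc : 3 ≤ c) (hcd : c ≤ d) (q : ℕ) (hq : 2 ≤ q)
    (hqd : 3 ≤ q ∨ Odd d) :
    ∃ z2 ∈ Set.Ioo (-(1 / ((q : ℝ) - 1))) 1,
      0 < z2 ∧ xiF q c d z2 = 0 ∧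
      (∀ z ∈ Set.Ioo (-(1 / ((q : ℝ) - 1))) 1, xiF q c d z = 0 → z = z2) ∧
      (∀ z ∈ Set.Ioo (-(1 / ((q : ℝ) - 1))) z2, 0 < xiF q c d z) ∧
      (∀ z ∈ Set.Ioo z2 1, xiF q c d z < 0) := by
  have hd3 : 3 ≤ d := hc.trans hcd
  set A : ℝ := ((c:ℝ) - 1) * ((d:ℝ) - 1) - 1 with hA
  clear_value A
  have hdR : (3:ℝ) ≤ (d:ℝ) := by exact_mod_cast hd3
  have hcR : (3:ℝ) ≤ (c:ℝ) := by exact_mod_cast hc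
  have hAge : 2 * ((d:ℝ) - 1) - 1 ≤ A := by rw [hA]; nlinarith
  have hA0 : 0 < A := by nlinarith
  have hqR : (2:ℝ) ≤ (q:ℝ) := by exact_mod_cast hq
  have hq1 : (1:ℝ) ≤ (q:ℝ) - 1 := by linarith
  set U : ℝ → ℝ := fun z =>
    (∑ i ∈ Finset.range (d - 2), (z ^ (i + 1))⁻¹)
      + ((-A) + (-(((q:ℝ) - 1) * A)) * z
        + ((q:ℝ) - 1) * ∑ i ∈ Finset.range (d - 2), z ^ (i + 2)) with hU
  have hU_sco : StrictConvexOn ℝ (Set.Ioi 0) U := by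
    have h1 := strictConvexOn_sum_invpow (d - 2) (by omega)
    have h2 := (convexOn_affine (-A) (-(((q:ℝ) - 1) * A))).add
      ((convexOn_sum_pow (d - 2) 2).smul (by linarith : (0:ℝ) ≤ (q:ℝ) - 1))
    exact (h1.add_convexOn h2).congr fun z hz => by
      simp only [Pi.add_apply, smul_eq_mul, hU]
  have hUval : ∀ z : ℝ, z ≠ 0 → xiF q c d z = z ^ (d - 2) * U z := by
    intro z hz
    have e1 : z ^ (d-2) * (∑ i ∈ Finset.range (d-2), (z ^ (i+1))⁻¹)
        = ∑ i ∈ Finset.range (d-2), z ^ i := by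
      rw [Finset.mul_sum]
      have h1 : ∀ i ∈ Finset.range (d-2), z^(d-2) * (z^(i+1))⁻¹ = z^(d-2-1-i) := by
        intro i hi
        rw [Finset.mem_range] at hi
        have he : z^(d-2) = z^(d-2-1-i) * z^(i+1) := by rw [← pow_add]; congr 1; omega
        rw [he, mul_inv_cancel_right₀ (pow_ne_zero _ hz)]
      rw [Finset.sum_congr rfl h1]
      exact Finset.sum_range_reflect (fun j => z ^ j) (d-2)
    have e2 : z^(d-2) * (∑ i ∈ Finset.range (d-2), z^(i+2))
        = ∑ i ∈ Finset.range (d-2), z^(d+i) := by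
      rw [Finset.mul_sum]
      refine Finset.sum_congr rfl fun i hi => ?_
      rw [← pow_add]; congr 1; omega
    have e3 : z^(d-2) * z = z^(d-1) := by rw [← pow_succ]; congr 1; omega
    have expand : z^(d-2) * U z
        = z^(d-2) * (∑ i ∈ Finset.range (d-2), (z^(i+1))⁻¹) + (-A) * z^(d-2)
          + (-(((q:ℝ)-1)*A)) * (z^(d-2) * z)
          + ((q:ℝ)-1) * (z^(d-2) * (∑ i ∈ Finset.range (d-2), z^(i+2))) := by
      simp only [hU]; ring
    rw [expand, e1, e2, e3]
    unfold xiF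
    rw [← hA]
    ring
  have hU1 : U 1 < 0 := by
    have hsum1 : (∑ i ∈ Finset.range (d-2), ((1:ℝ) ^ (i+1))⁻¹) = ((d-2 : ℕ) : ℝ) := by simp
    have hsum2 : (∑ i ∈ Finset.range (d-2), (1:ℝ) ^ (i+2)) = ((d-2 : ℕ) : ℝ) := by simp
    simp only [hU]
    rw [hsum1, hsum2]
    have hcast : ((d-2 : ℕ) : ℝ) = (d:ℝ) - 2 := by
      rw [Nat.cast_sub (by omega : 2 ≤ d)]; norm_num
    rw [hcast]
    nlinarith [mul_le_mul_of_nonneg_left (show (d:ℝ)-2 ≤ A from by linarith)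
      (by linarith : (0:ℝ) ≤ (q:ℝ)-1)]
  set ε : ℝ := ((q:ℝ) * A + 1)⁻¹ with hε
  have hqA : (0:ℝ) < (q:ℝ) * A := mul_pos (by linarith) hA0
  have hε0 : 0 < ε := by rw [hε]; positivity
  have hε1 : ε < 1 := by
    rw [hε]
    rw [inv_lt_one_iff₀]
    right; linarith
  have hUε : 0 < U ε := by
    have h0mem : 0 ∈ Finset.range (d-2) := Finset.mem_range.mpr (by omega)
    have h00 : (ε^(0+1):ℝ)⁻¹ ≤ ∑ i ∈ Finset.range (d-2), (ε ^ (i+1))⁻¹ :=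
      Finset.single_le_sum (f := fun i => (ε ^ (i+1))⁻¹) (fun i _ => by positivity) h0mem
    rw [zero_add, pow_one] at h00
    have hsum2 : (0:ℝ) ≤ ∑ i ∈ Finset.range (d-2), ε ^ (i+2) := by positivity
    have hinv : ε⁻¹ = (q:ℝ)*A + 1 := by rw [hε, inv_inv]
    have h3 : 0 ≤ ((q:ℝ)-1) * A * (1 - ε) :=
      mul_nonneg (mul_nonneg (by linarith) hA0.le) (by linarith)
    have h4 : 0 ≤ ((q:ℝ)-1) * ∑ i ∈ Finset.range (d-2), ε ^ (i+2) :=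
      mul_nonneg (by linarith) hsum2
    simp only [hU]
    nlinarith [h00, h3, h4, hinv]
  obtain ⟨z2, hz2mem, hz2zero, hpos, hneg⟩ := convex_sign U hU_sco ε ⟨hε0, hε1⟩ hUε hU1
  have hq1pos : (0:ℝ) < (q:ℝ) - 1 := by linarith
  have hbpos : (0:ℝ) < 1 / ((q:ℝ) - 1) := by positivity
  refine ⟨z2, ⟨by linarith [hz2mem.1], hz2mem.2⟩, hz2mem.1, ?_, ?_, ?_, ?_⟩
  · rw [hUval z2 (ne_of_gt hz2mem.1), hz2zero, mul_zero]
  · rintro z ⟨hzl, hzr⟩ hzero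
    rcases lt_trichotomy z 0 with hneg0 | rfl | hpos0
    · exact absurd hzero (ne_of_gt (xiF_pos_neg q c d hc hcd hq hqd hzl hneg0))
    · rw [xiF_zero q c d (by omega)] at hzero; norm_num at hzero
    · have hUz : U z = 0 := by
        have h := hUval z (ne_of_gt hpos0)
        rw [h] at hzero
        exact (mul_eq_zero.mp hzero).resolve_left (ne_of_gt (pow_pos hpos0 _))
      rcases lt_trichotomy z z2 with h | h | h
      · exact absurd hUz (ne_of_gt (hpos z ⟨hpos0, h⟩))
      · exact h
      · exact absurd hUz (ne_of_lt (hneg z ⟨h, hzr⟩))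
  · rintro z ⟨hzl, hzr⟩
    rcases lt_trichotomy z 0 with hneg0 | rfl | hpos0
    · exact xiF_pos_neg q c d hc hcd hq hqd hzl hneg0
    · rw [xiF_zero q c d (by omega)]; norm_num
    · rw [hUval z (ne_of_gt hpos0)]
      exact mul_pos (pow_pos hpos0 _) (hpos z ⟨hpos0, hzr⟩)
  · rintro z ⟨hzl, hzr⟩
    have hz0 : 0 < z := hz2mem.1.trans hzl
    rw [hUval z (ne_of_gt hz0)]
    exact mul_neg_of_pos_of_neg (pow_pos hz0 _) (hneg z ⟨hzl, hzr⟩)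

set_option maxHeartbeats 1000000 in
lemma part_one (c d : ℕ) (hc : 3 ≤ c) (hcd : c ≤ d) (hdev : Even d) :
    ∃ z2 ∈ Set.Ioo (0 : ℝ) 1, ∃ z2' ∈ Set.Ioo (-1 : ℝ) 0,
      xiF 2 c d z2 = 0 ∧ xiF 2 c d z2' = 0 ∧
      (∀ z ∈ Set.Ioo (0 : ℝ) 1, xiF 2 c d z = 0 → z = z2) ∧
      (∀ z ∈ Set.Ioo (-1 : ℝ) 0, xiF 2 c d z = 0 → z = z2') ∧
      (∀ z ∈ Set.Ioo z2' z2, 0 < xiF 2 c d z) ∧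
      (∀ z ∈ Set.Ioo (-1 : ℝ) z2' ∪ Set.Ioo z2 1, xiF 2 c d z < 0) := by
  have hd3 : 3 ≤ d := hc.trans hcd
  obtain ⟨e, he⟩ := hdev
  have he2 : 2 ≤ e := by omega
  set A : ℝ := ((c:ℝ) - 1) * ((d:ℝ) - 1) - 1 with hA
  clear_value A
  have hdR : (3:ℝ) ≤ (d:ℝ) := by exact_mod_cast hd3
  have hcR : (3:ℝ) ≤ (c:ℝ) := by exact_mod_cast hc
  have hAge : 2 * ((d:ℝ) - 1) - 1 ≤ A := by rw [hA]; nlinarith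
  have hA0 : 0 < A := by nlinarith
  have hde : (d:ℝ) = 2*(e:ℝ) := by rw [he]; push_cast; ring
  set Hf : ℝ → ℝ := fun s =>
    (∑ i ∈ Finset.range (e - 1), (s ^ (i + 1))⁻¹)
      + ((-A) + (0:ℝ) * s + (1:ℝ) * ∑ i ∈ Finset.range (e - 1), s ^ (i + 1)) with hHf
  have hH_sco : StrictConvexOn ℝ (Set.Ioi 0) Hf := by
    have h1 := strictConvexOn_sum_invpow (e - 1) (by omega)
    have h2 := (convexOn_affine (-A) 0).add
      ((convexOn_sum_pow (e - 1) 1).smul (by norm_num : (0:ℝ) ≤ 1))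
    exact (h1.add_convexOn h2).congr fun s hs => by
      simp only [Pi.add_apply, smul_eq_mul, hHf]
  have hHval : ∀ z : ℝ, z ≠ 0 → xiF 2 c d z = z ^ (d - 2) * (1 + z) * Hf (z ^ 2) := by
    intro z hz
    have hpe1 : ∀ i ∈ Finset.range (e-1),
        z^(d-2) * (1+z) * (((z^2) ^ (i+1))⁻¹)
          = z^(2*(e-1-1-i)) + z^(2*(e-1-1-i)+1) := by
      intro i hi
      rw [Finset.mem_range] at hi
      have h2 : (z^2)^(i+1) = z^(2*i+2) := by rw [← pow_mul]; congr 1 <;> omega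
      have h3 : z^(d-2) = z^(2*(e-1-1-i)) * z^(2*i+2) := by rw [← pow_add]; congr 1; omega
      have hne : z^(2*i+2) ≠ 0 := pow_ne_zero _ hz
      rw [h2, h3]
      field_simp
      ring
    have e1 : z^(d-2) * (1+z) * (∑ i ∈ Finset.range (e-1), ((z^2)^(i+1))⁻¹)
        = ∑ i ∈ Finset.range (d-2), z^i := by
      rw [Finset.mul_sum, Finset.sum_congr rfl hpe1,
        Finset.sum_range_reflect (fun j => z^(2*j) + z^(2*j+1)) (e-1),
        show d - 2 = 2*(e-1) from by omega]
      exact (sum_range_two_mul (fun j => z^j) (e-1)).symm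
    have hpe2 : ∀ i ∈ Finset.range (e-1),
        z^(d-2) * (1+z) * ((z^2)^(i+1)) = z^(d+2*i) + z^(d+(2*i+1)) := by
      intro i hi
      have h2 : (z^2)^(i+1) = z^(2*i+2) := by rw [← pow_mul]; congr 1 <;> omega
      have h3 : z^(d+2*i) = z^(d-2) * z^(2*i+2) := by rw [← pow_add]; congr 1; omega
      have h4 : z^(d+(2*i+1)) = z^(d+2*i) * z := by rw [← pow_succ]; congr 1 <;> omega
      rw [h2, h4, h3]; ring
    have e2 : z^(d-2) * (1+z) * (∑ i ∈ Finset.range (e-1), (z^2)^(i+1))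
        = ∑ i ∈ Finset.range (d-2), z^(d+i) := by
      rw [Finset.mul_sum, Finset.sum_congr rfl hpe2,
        show d - 2 = 2*(e-1) from by omega]
      exact (sum_range_two_mul (fun j => z^(d+j)) (e-1)).symm
    have e3 : z^(d-2) * z = z^(d-1) := by rw [← pow_succ]; congr 1; omega
    have expand : z^(d-2) * (1+z) * Hf (z^2)
        = z^(d-2)*(1+z) * (∑ i ∈ Finset.range (e-1), ((z^2)^(i+1))⁻¹)
          + (-A) * z^(d-2) + (-A) * (z^(d-2)*z)
          + z^(d-2)*(1+z) * (∑ i ∈ Finset.range (e-1), (z^2)^(i+1)) := by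
      simp only [hHf]; ring
    rw [expand, e1, e2, e3]
    unfold xiF
    rw [← hA]
    push_cast
    ring
  have hH1 : Hf 1 < 0 := by
    have hsum1 : (∑ i ∈ Finset.range (e-1), ((1:ℝ) ^ (i+1))⁻¹) = ((e-1 : ℕ) : ℝ) := by simp
    have hsum2 : (∑ i ∈ Finset.range (e-1), (1:ℝ) ^ (i+1)) = ((e-1 : ℕ) : ℝ) := by simp
    simp only [hHf]
    rw [hsum1, hsum2]
    have hcast : ((e-1 : ℕ) : ℝ) = (e:ℝ) - 1 := by
      rw [Nat.cast_sub (by omega : 1 ≤ e)]; norm_num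
    rw [hcast]
    have heR : (2:ℝ) ≤ (e:ℝ) := by exact_mod_cast he2
    nlinarith
  set ε : ℝ := (A + 1)⁻¹ with hε
  have hε0 : 0 < ε := by rw [hε]; positivity
  have hε1 : ε < 1 := by
    rw [hε, inv_lt_one_iff₀]
    right; linarith
  have hHε : 0 < Hf ε := by
    have h0mem : 0 ∈ Finset.range (e-1) := Finset.mem_range.mpr (by omega)
    have h00 : (ε^(0+1):ℝ)⁻¹ ≤ ∑ i ∈ Finset.range (e-1), (ε ^ (i+1))⁻¹ :=
      Finset.single_le_sum (f := fun i => (ε ^ (i+1))⁻¹) (fun i _ => by positivity) h0mem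
    rw [zero_add, pow_one] at h00
    have hsum2 : (0:ℝ) ≤ ∑ i ∈ Finset.range (e-1), ε ^ (i+1) := by positivity
    have hinv : ε⁻¹ = A + 1 := by rw [hε, inv_inv]
    simp only [hHf]
    nlinarith [h00, hsum2, hinv]
  obtain ⟨s2, hs2mem, hs2zero, hposH, hnegH⟩ := convex_sign Hf hH_sco ε ⟨hε0, hε1⟩ hHε hH1
  set z2 : ℝ := Real.sqrt s2 with hz2def
  have hz20 : 0 < z2 := Real.sqrt_pos.mpr hs2mem.1
  have hz21 : z2 < 1 := by
    have h := Real.sqrt_lt_sqrt hs2mem.1.le hs2mem.2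
    rwa [Real.sqrt_one] at h
  have hz2sq : z2^2 = s2 := Real.sq_sqrt hs2mem.1.le
  have hfacpos : ∀ z:ℝ, z ≠ 0 → -1 < z → 0 < z^(d-2)*(1+z) := by
    intro z hz h1
    have hev2 : Even (d-2) := ⟨e-1, by omega⟩
    exact mul_pos (hev2.pow_pos hz) (by linarith)
  refine ⟨z2, ⟨hz20, hz21⟩, -z2, ⟨by linarith, by linarith⟩, ?_, ?_, ?_, ?_, ?_, ?_⟩
  · rw [hHval z2 (ne_of_gt hz20), hz2sq, hs2zero, mul_zero]
  · rw [hHval (-z2) (neg_ne_zero.mpr (ne_of_gt hz20)),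
      show ((-z2):ℝ)^2 = z2^2 from by ring, hz2sq, hs2zero, mul_zero]
  · rintro z ⟨hz0, hz1⟩ hzero
    have hzz : Hf (z^2) = 0 := by
      have h := hHval z (ne_of_gt hz0)
      rw [h] at hzero
      exact (mul_eq_zero.mp hzero).resolve_left
        (ne_of_gt (hfacpos z (ne_of_gt hz0) (by linarith)))
    have hz2pos : 0 < z^2 := pow_pos hz0 2
    have hz2lt1 : z^2 < 1 := by nlinarith
    have hzs : z^2 = s2 := by
      rcases lt_trichotomy (z^2) s2 with h | h | h
      · exact absurd hzz (ne_of_gt (hposH _ ⟨hz2pos, h⟩))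
      · exact h
      · exact absurd hzz (ne_of_lt (hnegH _ ⟨h, hz2lt1⟩))
    rw [hz2def, ← hzs, Real.sqrt_sq hz0.le]
  · rintro z ⟨hzm1, hz0⟩ hzero
    have hz : z ≠ 0 := ne_of_lt hz0
    have hzz : Hf (z^2) = 0 := by
      have h := hHval z hz
      rw [h] at hzero
      exact (mul_eq_zero.mp hzero).resolve_left
        (ne_of_gt (hfacpos z hz hzm1))
    have hz2pos : 0 < z^2 := by nlinarith
    have hz2lt1 : z^2 < 1 := by nlinarith
    have hzs : z^2 = s2 := by
      rcases lt_trichotomy (z^2) s2 with h | h | h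
      · exact absurd hzz (ne_of_gt (hposH _ ⟨hz2pos, h⟩))
      · exact h
      · exact absurd hzz (ne_of_lt (hnegH _ ⟨h, hz2lt1⟩))
    rw [hz2def, ← hzs, Real.sqrt_sq_eq_abs, abs_of_neg hz0, neg_neg]
  · rintro z ⟨hzl, hzr⟩
    rcases eq_or_ne z 0 with rfl | hz
    · rw [xiF_zero 2 c d (by omega)]; norm_num
    · have h1 : -1 < z := by linarith
      have hz2pos : 0 < z^2 := lt_of_le_of_ne (sq_nonneg z) (Ne.symm (pow_ne_zero 2 hz))
      have hzlt : z^2 < s2 := by nlinarith [hz2sq]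
      rw [hHval z hz]
      exact mul_pos (hfacpos z hz h1) (hposH _ ⟨hz2pos, hzlt⟩)
  · rintro z (⟨hzl, hzr⟩ | ⟨hzl, hzr⟩)
    · have hz : z ≠ 0 := by intro h; rw [h] at hzr; linarith
      have hzgt : s2 < z^2 := by nlinarith [hz2sq]
      have hzlt1 : z^2 < 1 := by nlinarith
      rw [hHval z hz]
      exact mul_neg_of_pos_of_neg (hfacpos z hz hzl) (hnegH _ ⟨hzgt, hzlt1⟩)
    · have hz0 : 0 < z := hz20.trans hzl
      have hzgt : s2 < z^2 := by nlinarith [hz2sq]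
      have hzlt1 : z^2 < 1 := by nlinarith
      rw [hHval z (ne_of_gt hz0)]
      exact mul_neg_of_pos_of_neg (hfacpos z (ne_of_gt hz0) (by linarith))
        (hnegH _ ⟨hzgt, hzlt1⟩)

/-- Sign pattern of `ξ_{q,c,d}` for `d ≥ c ≥ 3`: when `q = 2` and `d` is
even there is exactly one zero in `(0,1)` and one in `(−1,0)`, with `ξ` positive between
them and negative outside; when `q ≥ 3` or `d` is odd there is a unique zero
`ẑ₂ ∈ (−1/(q−1), 1)`, which is positive, with `ξ` positive before it and negative after. -/
theorem xiF_signs (c d : ℕ) (hc : 3 ≤ c) (hcd : c ≤ d) :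
    (Even d →
      ∃ z2 ∈ Set.Ioo (0 : ℝ) 1, ∃ z2' ∈ Set.Ioo (-1 : ℝ) 0,
        xiF 2 c d z2 = 0 ∧ xiF 2 c d z2' = 0 ∧
        (∀ z ∈ Set.Ioo (0 : ℝ) 1, xiF 2 c d z = 0 → z = z2) ∧
        (∀ z ∈ Set.Ioo (-1 : ℝ) 0, xiF 2 c d z = 0 → z = z2') ∧
        (∀ z ∈ Set.Ioo z2' z2, 0 < xiF 2 c d z) ∧
        (∀ z ∈ Set.Ioo (-1 : ℝ) z2' ∪ Set.Ioo z2 1, xiF 2 c d z < 0)) ∧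
    (∀ q : ℕ, 2 ≤ q → 3 ≤ q ∨ Odd d →
      ∃ z2 ∈ Set.Ioo (-(1 / ((q : ℝ) - 1))) 1,
        0 < z2 ∧ xiF q c d z2 = 0 ∧
        (∀ z ∈ Set.Ioo (-(1 / ((q : ℝ) - 1))) 1, xiF q c d z = 0 → z = z2) ∧
        (∀ z ∈ Set.Ioo (-(1 / ((q : ℝ) - 1))) z2, 0 < xiF q c d z) ∧
        (∀ z ∈ Set.Ioo z2 1, xiF q c d z < 0)) := by
  exact ⟨fun hdev => part_one c d hc hcd hdev, fun q hq hqd => part_two c d hc hcd q hq hqd⟩
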